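/- Let H be a real Hilbert space with orthogonal decomposition of a finite-dimensional subspace P = M ⊕ B where B = span{b₁,…,bₙ} with b₁,…,bₙ pairwise orthogonal and nonzero, and M ⊥ B. Let f₁,…,fₙ : M → ℝ be bounded linear functionals with Riesz representatives φᵢ ∈ M (so ⟪φᵢ, q⟫ = fᵢ(q) for all q ∈ M). Define M' = { q + Σᵢ fᵢ(q) bᵢ : q ∈ M }. Then the vectors ψᵢ := φᵢ − bᵢ/‖bᵢ‖² (i = 1,…,n) are linearly independent, lie in P, and satisfy ⟪ψᵢ, p⟩ = 0 for every p ∈ M'. -/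

import Mathlib

open scoped RealInnerProductSpace

theorem orthogonal_complement_modified
    {H : Type*} [NormedAddCommGroup H] [InnerProductSpace ℝ H] [CompleteSpace H]
    (M : Submodule ℝ H) [FiniteDimensional ℝ M] {n : ℕ} (b : Fin n → H)
    (hbne : ∀ i, b i ≠ 0)
    (hborth : ∀ i j, i ≠ j → ⟪b i, b j⟫ = 0)
    (hMorth : ∀ i, ∀ q ∈ M, ⟪q, b i⟫ = 0)
    (f : Fin n → H → ℝ) (φ : Fin n → H)
    (hφmem : ∀ i, φ i ∈ M)
    (hRiesz : ∀ i, ∀ q ∈ M, ⟪φ i, q⟫ = f i q) :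
    LinearIndependent ℝ (fun i => φ i - (1 / ‖b i‖ ^ 2) • b i) ∧
      (∀ i, φ i - (1 / ‖b i‖ ^ 2) • b i ∈ M ⊔ Submodule.span ℝ (Set.range b)) ∧
      (∀ i, ∀ p ∈ {x : H | ∃ q ∈ M, x = q + ∑ j, f j q • b j},
        ⟪φ i - (1 / ‖b i‖ ^ 2) • b i, p⟫ = 0) := by
  have hb2 : ∀ i, ‖b i‖ ^ 2 ≠ 0 := fun i => by
    simpa using (norm_ne_zero_iff.mpr (hbne i))
  -- inner of ψ i with b j
  have key : ∀ i j, ⟪φ i - (1 / ‖b i‖ ^ 2) • b i, b j⟫ =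
      if i = j then -1 else 0 := by
    intro i j
    rw [inner_sub_left, real_inner_smul_left, hMorth j _ (hφmem i)]
    by_cases h : i = j
    · subst h
      rw [real_inner_self_eq_norm_sq]
      field_simp
      simp [div_self (norm_ne_zero_iff.mpr (hbne i))]
    · rw [hborth i j h]
      simp [h]
  refine ⟨?_, ?_, ?_⟩
  · rw [Fintype.linearIndependent_iff]
    intro g hg j
    have := congrArg (fun x => ⟪x, b j⟫) hg
    simp only [inner_zero_left, sum_inner, real_inner_smul_left] at this
    rw [Finset.sum_eq_single j] at this
    · rw [key j j] at this; simp at this; linarith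
    · intro i _ hij
      rw [key i j]; simp [hij]
    · simp
  · intro i
    exact Submodule.sub_mem _ (Submodule.mem_sup_left (hφmem i))
      (Submodule.mem_sup_right (Submodule.smul_mem _ _
        (Submodule.subset_span ⟨i, rfl⟩)))
  · rintro i p ⟨q, hq, rfl⟩
    rw [inner_add_right, inner_sum]
    have h1 : ⟪φ i - (1 / ‖b i‖ ^ 2) • b i, q⟫ = f i q := by
      rw [inner_sub_left, real_inner_smul_left, hRiesz i q hq,
        real_inner_comm, hMorth i q hq]
      ring
    have h2 : ∀ j, ⟪φ i - (1 / ‖b i‖ ^ 2) • b i, f j q • b j⟫ =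
        if i = j then -(f i q) else 0 := by
      intro j
      rw [real_inner_smul_right, key i j]
      by_cases h : i = j <;> simp [h]
    rw [h1]
    rw [Finset.sum_congr rfl (fun j _ => h2 j), Finset.sum_ite_eq Finset.univ i]
    simp
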